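/- Let γ > 0, 0 ≤ σ_s < σ_f, and t₂ ≤ t₃ < t₃' ≤ T. Let (x₂, y₂) ∈ D. For θ ∈ {t₃, t₃'}, let (x_θ, y_θ) be the solution on [t₂, T] of the SIR system x' = -γ σ(t) x y, y' = γ σ(t) x y - γ y with (x_θ(t₂), y_θ(t₂)) = (x₂, y₂) and control σ(t) = σ_s for t ∈ [t₂, θ], σ(t) = σ_f for t ∈ (θ, T]; and let z_θ be the unique z ∈ (0, 1/σ_f) satisfying z · exp(-σ_f z) = x_θ(T) · exp(-σ_f (x_θ(T) + y_θ(T))). Then z_{t₃} < z_{t₃'}; that is, extending the duration of the strict quarantine strictly increases the asymptotic fraction of susceptibles. -/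

import Mathlib

open Set Filter Topology

-- positivity for a scalar linear ODE y' = b(t) y within Icc
lemma posODE {y b : ℝ → ℝ} {a c : ℝ} (hac : a ≤ c)
    (hb : ContinuousOn b (Icc a c))
    (hy : ∀ t ∈ Icc a c, HasDerivWithinAt y (b t * y t) (Icc a c) t)
    (h0 : 0 < y a) : ∀ t ∈ Icc a c, 0 < y t := by
  have hycont : ContinuousOn y (Icc a c) := fun t ht => (hy t ht).continuousWithinAt
  -- bound on b
  obtain ⟨M0, hM0⟩ := (isCompact_Icc).exists_bound_of_continuousOn hb
  set M := max M0 0 with hM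
  have hMnn : 0 ≤ M := le_max_right _ _
  have hbM : ∀ t ∈ Icc a c, -M ≤ b t := by
    intro t ht
    have := hM0 t ht
    have : |b t| ≤ M := le_trans (by simpa [Real.norm_eq_abs] using this) (le_max_left _ _)
    linarith [abs_le.mp this |>.1]
  by_contra hcon
  push_neg at hcon
  obtain ⟨t₀, ht₀, hyt₀⟩ := hcon
  -- set of zeros of y in [a, t₀]
  have hat₀ : a ≤ t₀ := ht₀.1
  have hsub : Icc a t₀ ⊆ Icc a c := Icc_subset_Icc_right ht₀.2
  have hIVT : ∃ t ∈ Icc a t₀, y t = 0 := by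
    have : (0:ℝ) ∈ Icc (y t₀) (y a) := ⟨hyt₀, le_of_lt h0⟩
    have := intermediate_value_Icc' hat₀ (hycont.mono hsub) this
    obtain ⟨t, ht, hyt⟩ := this
    exact ⟨t, ht, hyt⟩
  set Z := {t ∈ Icc a t₀ | y t = 0} with hZ
  have hZne : Z.Nonempty := hIVT
  have hZclosed : IsClosed Z := by
    have : Z = Icc a t₀ ∩ y ⁻¹' {0} := by ext t; simp only [hZ, Set.mem_setOf_eq, Set.mem_inter_iff, Set.mem_preimage, Set.mem_singleton_iff]
    rw [this]
    exact (hycont.mono hsub).preimage_isClosed_of_isClosed isClosed_Icc isClosed_singleton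
  have hZbdd : BddBelow Z := ⟨a, fun t ht => ht.1.1⟩
  set s := sInf Z with hs
  have hsZ : s ∈ Z := hZclosed.csInf_mem hZne hZbdd
  have hys : y s = 0 := hsZ.2
  have hsa : a < s := by
    rcases lt_or_eq_of_le hsZ.1.1 with h | h
    · exact h
    · exfalso; rw [← h] at hys; linarith
  have hsc : s ≤ c := le_trans hsZ.1.2 ht₀.2
  -- y > 0 on [a, s)
  have hpos : ∀ t ∈ Ico a s, 0 < y t := by
    intro t ht
    by_contra h
    push_neg at h
    have : ∃ u ∈ Icc a t, y u = 0 := by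
      have : (0:ℝ) ∈ Icc (y t) (y a) := ⟨h, le_of_lt h0⟩
      have hsub2 : Icc a t ⊆ Icc a c := Icc_subset_Icc_right (le_trans (le_of_lt ht.2) hsc)
      obtain ⟨u, hu, hyu⟩ := intermediate_value_Icc' ht.1 (hycont.mono hsub2) this
      exact ⟨u, hu, hyu⟩
    obtain ⟨u, hu, hyu⟩ := this
    have : u ∈ Z := ⟨⟨hu.1, le_trans hu.2 (le_trans (le_of_lt ht.2) hsZ.1.2)⟩, hyu⟩
    have := csInf_le hZbdd this
    have : s ≤ t := le_trans this hu.2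
    exact absurd ht.2 (not_lt.mpr this)
  -- the function log y + M t is monotone on [a, s)
  have hmono : MonotoneOn (fun t => Real.log (y t) + M * t) (Ico a s) := by
    apply monotoneOn_of_deriv_nonneg (convex_Ico a s)
    · apply ContinuousOn.add
      · exact ((hycont.mono (Ico_subset_Icc_self.trans (Icc_subset_Icc_right hsc))).log
          (fun t ht => ne_of_gt (hpos t ht)))
      · exact (continuous_const.mul continuous_id).continuousOn
    · intro t ht
      rw [interior_Ico] at ht
      have htIcc : t ∈ Icc a c := ⟨le_of_lt ht.1, le_trans (le_of_lt ht.2) hsc⟩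
      have hmem : Icc a c ∈ 𝓝 t := Icc_mem_nhds ht.1 (lt_of_lt_of_le ht.2 hsc)
      have hd : HasDerivAt y (b t * y t) t := (hy t htIcc).hasDerivAt hmem
      have hyt : 0 < y t := hpos t ⟨le_of_lt ht.1, ht.2⟩
      have : HasDerivAt (fun u => Real.log (y u) + M * u) (b t * y t / y t + M) t :=
        ((hd.log (ne_of_gt hyt)).add ((hasDerivAt_id t).const_mul M)).congr_deriv (by rw [mul_one])
      exact (this.differentiableAt).differentiableWithinAt
    · intro t ht
      rw [interior_Ico] at ht
      have htIcc : t ∈ Icc a c := ⟨le_of_lt ht.1, le_trans (le_of_lt ht.2) hsc⟩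
      have hmem : Icc a c ∈ 𝓝 t := Icc_mem_nhds ht.1 (lt_of_lt_of_le ht.2 hsc)
      have hd : HasDerivAt y (b t * y t) t := (hy t htIcc).hasDerivAt hmem
      have hyt : 0 < y t := hpos t ⟨le_of_lt ht.1, ht.2⟩
      have hD : HasDerivAt (fun u => Real.log (y u) + M * u) (b t * y t / y t + M) t :=
        ((hd.log (ne_of_gt hyt)).add ((hasDerivAt_id t).const_mul M)).congr_deriv (by rw [mul_one])
      rw [hD.deriv]
      rw [mul_div_assoc, div_self (ne_of_gt hyt), mul_one]
      linarith [hbM t htIcc]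
  -- lower bound ε for y on [a, s)
  set ε := y a * Real.exp (-M * (c - a)) with hε
  have hεpos : 0 < ε := mul_pos h0 (Real.exp_pos _)
  have hlb : ∀ t ∈ Ico a s, ε ≤ y t := by
    intro t ht
    have h1 : Real.log (y a) + M * a ≤ Real.log (y t) + M * t :=
      hmono (left_mem_Ico.mpr (lt_of_le_of_lt (le_refl a) (lt_of_le_of_lt ht.1 ht.2))) ht ht.1
    have h2 : Real.log (y a) - M * (t - a) ≤ Real.log (y t) := by linarith
    have h3 : Real.exp (Real.log (y a) - M * (t - a)) ≤ y t := by
      calc Real.exp (Real.log (y a) - M * (t - a)) ≤ Real.exp (Real.log (y t)) :=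
            Real.exp_le_exp.mpr h2
        _ = y t := Real.exp_log (hpos t ht)
    have h4 : ε ≤ Real.exp (Real.log (y a) - M * (t - a)) := by
      rw [hε, Real.exp_sub, Real.exp_log h0, div_eq_mul_inv, ← Real.exp_neg]
      apply mul_le_mul_of_nonneg_left _ (le_of_lt h0)
      apply Real.exp_le_exp.mpr
      have h5 : t - a ≤ c - a := by
        have : t ≤ c := le_trans (le_of_lt ht.2) hsc
        linarith
      have h6 : 0 ≤ t - a := by linarith [ht.1]
      nlinarith
    linarith
  -- contradiction: y s = 0 but y s ≥ ε by continuity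
  have hcl : s ∈ closure (Ico a s) := by
    rw [closure_Ico (ne_of_lt hsa)]
    exact ⟨le_of_lt hsa, le_refl s⟩
  have hne : (𝓝[Ico a s] s).NeBot := mem_closure_iff_nhdsWithin_neBot.mp hcl
  have hct : ContinuousWithinAt y (Ico a s) s :=
    (hycont s ⟨le_of_lt hsa, hsc⟩).mono (fun t ht => ⟨ht.1, le_trans (le_of_lt ht.2) hsc⟩)
  have : ε ≤ y s := ge_of_tendsto hct (eventually_nhdsWithin_of_forall hlb)
  linarith

-- derivative of the invariant φ(t) = log X(t) - σ' (X(t)+Y(t))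
lemma invariant_deriv {X Y : ℝ → ℝ} {γ σ σ' a c : ℝ}
    (hX : ∀ t ∈ Icc a c, HasDerivWithinAt X (-γ * σ * X t * Y t) (Icc a c) t)
    (hY : ∀ t ∈ Icc a c, HasDerivWithinAt Y (γ * σ * X t * Y t - γ * Y t) (Icc a c) t)
    (hXpos : ∀ t ∈ Icc a c, 0 < X t) :
    ∀ t ∈ Icc a c, HasDerivWithinAt (fun u => Real.log (X u) - σ' * (X u + Y u))
      (γ * (σ' - σ) * Y t) (Icc a c) t := by
  intro t ht
  have hne : X t ≠ 0 := ne_of_gt (hXpos t ht)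
  have h1 : HasDerivWithinAt (fun u => Real.log (X u)) ((-γ * σ * X t * Y t) / X t)
      (Icc a c) t := (hX t ht).log hne
  have h2 : HasDerivWithinAt (fun u => σ' * (X u + Y u))
      (σ' * ((-γ * σ * X t * Y t) + (γ * σ * X t * Y t - γ * Y t))) (Icc a c) t :=
    ((hX t ht).add (hY t ht)).const_mul σ'
  have h3 := h1.sub h2
  refine h3.congr_deriv ?_
  field_simp
  ring

-- the invariant with σ' = σ is conserved
lemma invariant_const {X Y : ℝ → ℝ} {γ σ a c : ℝ} (hac : a ≤ c)
    (hX : ∀ t ∈ Icc a c, HasDerivWithinAt X (-γ * σ * X t * Y t) (Icc a c) t)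
    (hY : ∀ t ∈ Icc a c, HasDerivWithinAt Y (γ * σ * X t * Y t - γ * Y t) (Icc a c) t)
    (hXpos : ∀ t ∈ Icc a c, 0 < X t) :
    ∀ t ∈ Icc a c, Real.log (X t) - σ * (X t + Y t) = Real.log (X a) - σ * (X a + Y a) := by
  have hd := invariant_deriv (σ' := σ) hX hY hXpos
  apply constant_of_has_deriv_right_zero
  · intro t ht
    exact (hd t ht).continuousWithinAt
  · intro t ht
    have h0 : HasDerivWithinAt (fun u => Real.log (X u) - σ * (X u + Y u)) 0 (Icc a c) t := by
      have := hd t (Ico_subset_Icc_self ht)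
      simpa using this
    apply h0.mono_of_mem_nhdsWithin
    have h1 : Iio c ∈ 𝓝 t := Iio_mem_nhds ht.2
    have h2 : Ici t ∩ Iio c ∈ 𝓝[Ici t] t := inter_mem_nhdsWithin _ h1
    apply Filter.mem_of_superset h2
    intro u hu
    exact ⟨le_trans ht.1 hu.1, le_of_lt hu.2⟩

-- the invariant with σ' > σ is strictly increasing (given Y > 0)
lemma invariant_strictMono {X Y : ℝ → ℝ} {γ σ σ' a c : ℝ} (hγ : 0 < γ) (hσ : σ < σ')
    (hX : ∀ t ∈ Icc a c, HasDerivWithinAt X (-γ * σ * X t * Y t) (Icc a c) t)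
    (hY : ∀ t ∈ Icc a c, HasDerivWithinAt Y (γ * σ * X t * Y t - γ * Y t) (Icc a c) t)
    (hXpos : ∀ t ∈ Icc a c, 0 < X t) (hYpos : ∀ t ∈ Icc a c, 0 < Y t) :
    StrictMonoOn (fun u => Real.log (X u) - σ' * (X u + Y u)) (Icc a c) := by
  have hd := invariant_deriv (σ' := σ') hX hY hXpos
  apply strictMonoOn_of_hasDerivWithinAt_pos (convex_Icc a c)
    (fun t ht => (hd t ht).continuousWithinAt)
    (f' := fun t => γ * (σ' - σ) * Y t)
  · intro t ht
    rw [interior_Icc] at ht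
    exact ((hd t (Ioo_subset_Icc_self ht)).mono (interior_Icc (a := a) (b := c) ▸
      Ioo_subset_Icc_self))
  · intro t ht
    rw [interior_Icc] at ht
    have := hYpos t (Ioo_subset_Icc_self ht)
    have h1 : 0 < σ' - σ := by linarith
    positivity

-- uniqueness of SIR solutions on an interval
lemma SIR_unique {X₁ Y₁ X₂ Y₂ : ℝ → ℝ} {γ σ a c : ℝ} (hac : a ≤ c)
    (hγ : 0 < γ) (hσ : 0 ≤ σ)
    (hX₁ : ∀ t ∈ Icc a c, HasDerivWithinAt X₁ (-γ * σ * X₁ t * Y₁ t) (Icc a c) t)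
    (hY₁ : ∀ t ∈ Icc a c, HasDerivWithinAt Y₁ (γ * σ * X₁ t * Y₁ t - γ * Y₁ t) (Icc a c) t)
    (hX₂ : ∀ t ∈ Icc a c, HasDerivWithinAt X₂ (-γ * σ * X₂ t * Y₂ t) (Icc a c) t)
    (hY₂ : ∀ t ∈ Icc a c, HasDerivWithinAt Y₂ (γ * σ * X₂ t * Y₂ t - γ * Y₂ t) (Icc a c) t)
    (h0x : X₁ a = X₂ a) (h0y : Y₁ a = Y₂ a) :
    X₁ c = X₂ c ∧ Y₁ c = Y₂ c := by
  set F : ℝ → ℝ × ℝ := fun t => (X₁ t, Y₁ t) with hF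
  set G : ℝ → ℝ × ℝ := fun t => (X₂ t, Y₂ t) with hG
  set v : ℝ → ℝ × ℝ → ℝ × ℝ :=
    fun _ p => (-γ * σ * p.1 * p.2, γ * σ * p.1 * p.2 - γ * p.2) with hv
  have hFd : ∀ t ∈ Icc a c, HasDerivWithinAt F (v t (F t)) (Icc a c) t :=
    fun t ht => (hX₁ t ht).prodMk (hY₁ t ht)
  have hGd : ∀ t ∈ Icc a c, HasDerivWithinAt G (v t (G t)) (Icc a c) t :=
    fun t ht => (hX₂ t ht).prodMk (hY₂ t ht)
  have hFc : ContinuousOn F (Icc a c) := fun t ht => (hFd t ht).continuousWithinAt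
  have hGc : ContinuousOn G (Icc a c) := fun t ht => (hGd t ht).continuousWithinAt
  obtain ⟨R₁, hR₁⟩ := isCompact_Icc.exists_bound_of_continuousOn hFc
  obtain ⟨R₂, hR₂⟩ := isCompact_Icc.exists_bound_of_continuousOn hGc
  set R := max (max R₁ R₂) 0 with hR
  have hRnn : 0 ≤ R := le_max_right _ _
  have hFR : ∀ t ∈ Icc a c, F t ∈ Metric.closedBall (0 : ℝ × ℝ) R := by
    intro t ht
    rw [mem_closedBall_zero_iff]
    exact le_trans (hR₁ t ht) (le_trans (le_max_left _ _) (le_max_left _ _))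
  have hGR : ∀ t ∈ Icc a c, G t ∈ Metric.closedBall (0 : ℝ × ℝ) R := by
    intro t ht
    rw [mem_closedBall_zero_iff]
    exact le_trans (hR₂ t ht) (le_trans (le_max_right _ _) (le_max_left _ _))
  set K : NNReal := Real.toNNReal (γ * σ * (2 * R) + γ) with hK
  have hKc : (K : ℝ) = γ * σ * (2 * R) + γ := by
    rw [hK, Real.coe_toNNReal]
    positivity
  have hlip : ∀ t : ℝ, LipschitzOnWith K (v t) (Metric.closedBall (0 : ℝ × ℝ) R) := by
    intro t
    rw [lipschitzOnWith_iff_dist_le_mul]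
    intro p hp q hq
    rw [mem_closedBall_zero_iff] at hp hq
    have hp1 : |p.1| ≤ R := le_trans (le_max_left _ _) hp
    have hp2 : |p.2| ≤ R := le_trans (le_max_right _ _) hp
    have hq1 : |q.1| ≤ R := le_trans (le_max_left _ _) hq
    have hq2 : |q.2| ≤ R := le_trans (le_max_right _ _) hq
    have hd1 : dist p.1 q.1 ≤ dist p q := by rw [Prod.dist_eq]; exact le_max_left _ _
    have hd2 : dist p.2 q.2 ≤ dist p q := by rw [Prod.dist_eq]; exact le_max_right _ _
    rw [Real.dist_eq] at hd1 hd2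
    have hdnn : 0 ≤ dist p q := dist_nonneg
    have key : |p.1 * p.2 - q.1 * q.2| ≤ 2 * R * dist p q := by
      have e : p.1 * p.2 - q.1 * q.2 = p.1 * (p.2 - q.2) + q.2 * (p.1 - q.1) := by ring
      calc |p.1 * p.2 - q.1 * q.2| ≤ |p.1 * (p.2 - q.2)| + |q.2 * (p.1 - q.1)| := by
            rw [e]; exact abs_add_le _ _
        _ = |p.1| * |p.2 - q.2| + |q.2| * |p.1 - q.1| := by rw [abs_mul, abs_mul]
        _ ≤ R * dist p q + R * dist p q := by
            apply add_le_add
            · exact mul_le_mul hp1 hd2 (abs_nonneg _) hRnn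
            · exact mul_le_mul hq2 hd1 (abs_nonneg _) hRnn
        _ = 2 * R * dist p q := by ring
    rw [hKc, Prod.dist_eq]
    apply max_le
    · rw [Real.dist_eq]
      have e : -γ * σ * p.1 * p.2 - -γ * σ * q.1 * q.2 = -((γ * σ) * (p.1 * p.2 - q.1 * q.2)) := by
        ring
      rw [show ((v t p).1 : ℝ) = -γ * σ * p.1 * p.2 from rfl,
        show ((v t q).1 : ℝ) = -γ * σ * q.1 * q.2 from rfl, e, abs_neg, abs_mul]
      rw [abs_of_nonneg (by positivity : (0:ℝ) ≤ γ * σ)]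
      have h1 := mul_le_mul_of_nonneg_left key (by positivity : (0:ℝ) ≤ γ * σ)
      have hdnn2 : 0 ≤ dist p q := dist_nonneg
      nlinarith
    · rw [Real.dist_eq]
      have e : (γ * σ * p.1 * p.2 - γ * p.2) - (γ * σ * q.1 * q.2 - γ * q.2)
          = (γ * σ) * (p.1 * p.2 - q.1 * q.2) + γ * (q.2 - p.2) := by ring
      rw [show ((v t p).2 : ℝ) = γ * σ * p.1 * p.2 - γ * p.2 from rfl,
        show ((v t q).2 : ℝ) = γ * σ * q.1 * q.2 - γ * q.2 from rfl, e]
      have h1 : |(γ * σ) * (p.1 * p.2 - q.1 * q.2)| ≤ γ * σ * (2 * R * dist p q) := by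
        rw [abs_mul, abs_of_nonneg (by positivity : (0:ℝ) ≤ γ * σ)]
        exact mul_le_mul_of_nonneg_left key (by positivity)
      have h2 : |γ * (q.2 - p.2)| ≤ γ * dist p q := by
        rw [abs_mul, abs_of_pos hγ, abs_sub_comm]
        exact mul_le_mul_of_nonneg_left hd2 (le_of_lt hγ)
      calc |(γ * σ) * (p.1 * p.2 - q.1 * q.2) + γ * (q.2 - p.2)|
          ≤ |(γ * σ) * (p.1 * p.2 - q.1 * q.2)| + |γ * (q.2 - p.2)| := abs_add_le _ _
        _ ≤ γ * σ * (2 * R * dist p q) + γ * dist p q := add_le_add h1 h2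
        _ = (γ * σ * (2 * R) + γ) * dist p q := by ring
  have hIci : ∀ (H : ℝ → ℝ × ℝ), (∀ t ∈ Icc a c, HasDerivWithinAt H (v t (H t)) (Icc a c) t) →
      ∀ t ∈ Ico a c, HasDerivWithinAt H (v t (H t)) (Ici t) t := by
    intro H hH t ht
    apply (hH t (Ico_subset_Icc_self ht)).mono_of_mem_nhdsWithin
    have h1 : Iio c ∈ 𝓝 t := Iio_mem_nhds ht.2
    have h2 : Ici t ∩ Iio c ∈ 𝓝[Ici t] t := inter_mem_nhdsWithin _ h1
    apply Filter.mem_of_superset h2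
    intro u hu
    exact ⟨le_trans ht.1 hu.1, le_of_lt hu.2⟩
  have heq : EqOn F G (Icc a c) :=
    ODE_solution_unique_of_mem_Icc_right (fun t _ => hlip t) hFc (hIci F hFd)
      (fun t ht => hFR t (Ico_subset_Icc_self ht)) hGc (hIci G hGd)
      (fun t ht => hGR t (Ico_subset_Icc_self ht))
      (by rw [hF, hG]; simp [h0x, h0y])
  have := heq (right_mem_Icc.mpr hac)
  rw [hF, hG] at this
  exact ⟨congrArg Prod.fst this, congrArg Prod.snd this⟩

-- strict monotonicity of z ↦ z exp(-σf z) on [0, 1/σf]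
lemma zexp_strictMono {σf : ℝ} (h : 0 < σf) :
    StrictMonoOn (fun z => z * Real.exp (-σf * z)) (Icc 0 (1 / σf)) := by
  apply strictMonoOn_of_hasDerivWithinAt_pos (convex_Icc _ _)
    (f' := fun z => Real.exp (-σf * z) * (1 - σf * z))
  · exact (continuous_id.mul ((continuous_const.mul continuous_id).rexp)).continuousOn
  · intro z hz
    have hd : HasDerivAt (fun z => z * Real.exp (-σf * z))
        (Real.exp (-σf * z) * (1 - σf * z)) z := by
      have h1 : HasDerivAt (fun z : ℝ => Real.exp (-σf * z)) (-σf * Real.exp (-σf * z)) z := by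
        simpa [mul_comm] using (((hasDerivAt_id z).const_mul (-σf)).exp)
      have := (hasDerivAt_id z).mul h1
      refine this.congr_deriv ?_
      simp only [id_eq, one_mul]
      ring
    exact hd.hasDerivWithinAt
  · intro z hz
    rw [interior_Icc] at hz
    have h1 : σf * z < 1 := by
      have := hz.2
      rw [lt_div_iff₀ h] at this
      linarith
    have h2 : 0 < 1 - σf * z := by linarith
    positivity


/-- Extending the duration of the strict quarantine strictly increases the asymptotic
fraction of susceptibles.  Starting from `(x₂, y₂) ∈ D` at time `t₂`, the control is
`σ_s` on `[t₂, θ]` and `σ_f` on `(θ, T]`; the asymptotic susceptible fraction `z_θ` is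
the unique `z ∈ (0, 1/σ_f)` with `z e^{-σ_f z} = x_θ(T) e^{-σ_f (x_θ(T) + y_θ(T))}`.
If `t₃ < t₃'` then `z_{t₃} < z_{t₃'}`. -/
theorem longer_strict_quarantine_increases_xinf
    (γ σs σf t₂ t₃ t₃' T : ℝ) (hγ : 0 < γ) (hσs : 0 ≤ σs) (hσsf : σs < σf)
    (ht₂ : t₂ ≤ t₃) (ht₃ : t₃ < t₃') (ht₃' : t₃' ≤ T)
    (x₂ y₂ : ℝ) (hx₂ : 0 < x₂) (hy₂ : 0 < y₂) (hxy₂ : x₂ + y₂ ≤ 1)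
    (X₁ Y₁ X₂ Y₂ : ℝ → ℝ)
    (hX₁s : ∀ t ∈ Icc t₂ t₃,
      HasDerivWithinAt X₁ (-γ * σs * X₁ t * Y₁ t) (Icc t₂ t₃) t)
    (hY₁s : ∀ t ∈ Icc t₂ t₃,
      HasDerivWithinAt Y₁ (γ * σs * X₁ t * Y₁ t - γ * Y₁ t) (Icc t₂ t₃) t)
    (hX₁f : ∀ t ∈ Icc t₃ T,
      HasDerivWithinAt X₁ (-γ * σf * X₁ t * Y₁ t) (Icc t₃ T) t)
    (hY₁f : ∀ t ∈ Icc t₃ T,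
      HasDerivWithinAt Y₁ (γ * σf * X₁ t * Y₁ t - γ * Y₁ t) (Icc t₃ T) t)
    (hX₁0 : X₁ t₂ = x₂) (hY₁0 : Y₁ t₂ = y₂)
    (hX₂s : ∀ t ∈ Icc t₂ t₃',
      HasDerivWithinAt X₂ (-γ * σs * X₂ t * Y₂ t) (Icc t₂ t₃') t)
    (hY₂s : ∀ t ∈ Icc t₂ t₃',
      HasDerivWithinAt Y₂ (γ * σs * X₂ t * Y₂ t - γ * Y₂ t) (Icc t₂ t₃') t)
    (hX₂f : ∀ t ∈ Icc t₃' T,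
      HasDerivWithinAt X₂ (-γ * σf * X₂ t * Y₂ t) (Icc t₃' T) t)
    (hY₂f : ∀ t ∈ Icc t₃' T,
      HasDerivWithinAt Y₂ (γ * σf * X₂ t * Y₂ t - γ * Y₂ t) (Icc t₃' T) t)
    (hX₂0 : X₂ t₂ = x₂) (hY₂0 : Y₂ t₂ = y₂)
    (z₁ z₂ : ℝ)
    (hz₁ : z₁ ∈ Ioo 0 (1 / σf) ∧
      z₁ * Real.exp (-σf * z₁) = X₁ T * Real.exp (-σf * (X₁ T + Y₁ T)))
    (hz₂ : z₂ ∈ Ioo 0 (1 / σf) ∧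
      z₂ * Real.exp (-σf * z₂) = X₂ T * Real.exp (-σf * (X₂ T + Y₂ T))) :
    z₁ < z₂ := by
  --
  have hσf : 0 < σf := lt_of_le_of_lt hσs hσsf
  have ht₂₃' : t₂ ≤ t₃' := le_trans ht₂ (le_of_lt ht₃)
  have ht₃T : t₃ ≤ T := le_trans (le_of_lt ht₃) ht₃'
  -- continuity
  have hX₁sc : ContinuousOn X₁ (Icc t₂ t₃) := fun t ht => (hX₁s t ht).continuousWithinAt
  have hY₁sc : ContinuousOn Y₁ (Icc t₂ t₃) := fun t ht => (hY₁s t ht).continuousWithinAt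
  have hX₂sc : ContinuousOn X₂ (Icc t₂ t₃') := fun t ht => (hX₂s t ht).continuousWithinAt
  have hY₂sc : ContinuousOn Y₂ (Icc t₂ t₃') := fun t ht => (hY₂s t ht).continuousWithinAt
  have hY₁fc : ContinuousOn Y₁ (Icc t₃ T) := fun t ht => (hY₁f t ht).continuousWithinAt
  have hY₂fc : ContinuousOn Y₂ (Icc t₃' T) := fun t ht => (hY₂f t ht).continuousWithinAt
  -- positivity of solution 1 on [t₂, t₃]
  have hX₁pos : ∀ t ∈ Icc t₂ t₃, 0 < X₁ t := by
    apply posODE (b := fun t => -γ * σs * Y₁ t) ht₂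
      ((continuous_const.continuousOn).mul hY₁sc)
      (fun t ht => by convert hX₁s t ht using 1; ring)
    rw [hX₁0]; exact hx₂
  have hY₁pos : ∀ t ∈ Icc t₂ t₃, 0 < Y₁ t := by
    apply posODE (b := fun t => γ * σs * X₁ t - γ) ht₂
      (((continuous_const.continuousOn).mul hX₁sc).sub continuous_const.continuousOn)
      (fun t ht => by convert hY₁s t ht using 1; ring)
    rw [hY₁0]; exact hy₂
  -- positivity of solution 2 on [t₂, t₃']
  have hX₂pos : ∀ t ∈ Icc t₂ t₃', 0 < X₂ t := by
    apply posODE (b := fun t => -γ * σs * Y₂ t) ht₂₃'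
      ((continuous_const.continuousOn).mul hY₂sc)
      (fun t ht => by convert hX₂s t ht using 1; ring)
    rw [hX₂0]; exact hx₂
  have hY₂pos : ∀ t ∈ Icc t₂ t₃', 0 < Y₂ t := by
    apply posODE (b := fun t => γ * σs * X₂ t - γ) ht₂₃'
      (((continuous_const.continuousOn).mul hX₂sc).sub continuous_const.continuousOn)
      (fun t ht => by convert hY₂s t ht using 1; ring)
    rw [hY₂0]; exact hy₂
  -- positivity of X₁ on [t₃, T] and X₂ on [t₃', T]
  have hX₁fpos : ∀ t ∈ Icc t₃ T, 0 < X₁ t := by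
    apply posODE (b := fun t => -γ * σf * Y₁ t) ht₃T
      ((continuous_const.continuousOn).mul hY₁fc)
      (fun t ht => by convert hX₁f t ht using 1; ring)
    exact hX₁pos t₃ (right_mem_Icc.mpr ht₂)
  have hX₂fpos : ∀ t ∈ Icc t₃' T, 0 < X₂ t := by
    apply posODE (b := fun t => -γ * σf * Y₂ t) ht₃'
      ((continuous_const.continuousOn).mul hY₂fc)
      (fun t ht => by convert hX₂f t ht using 1; ring)
    exact hX₂pos t₃' (right_mem_Icc.mpr ht₂₃')
  -- uniqueness: the two solutions agree at t₃
  have hsub : Icc t₂ t₃ ⊆ Icc t₂ t₃' := Icc_subset_Icc_right (le_of_lt ht₃)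
  obtain ⟨hxe, hye⟩ := SIR_unique ht₂ hγ hσs hX₁s hY₁s
    (fun t ht => (hX₂s t (hsub ht)).mono hsub)
    (fun t ht => (hY₂s t (hsub ht)).mono hsub)
    (by rw [hX₁0, hX₂0]) (by rw [hY₁0, hY₂0])
  -- the invariant is conserved along the σf-runs
  have A1 := invariant_const ht₃T hX₁f hY₁f hX₁fpos T (right_mem_Icc.mpr ht₃T)
  have A2 := invariant_const ht₃' hX₂f hY₂f hX₂fpos T (right_mem_Icc.mpr ht₃')
  -- the invariant strictly increases along the σs-run of solution 2 on [t₃, t₃']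
  have hsub2 : Icc t₃ t₃' ⊆ Icc t₂ t₃' := Icc_subset_Icc_left ht₂
  have S := invariant_strictMono hγ hσsf
    (fun t ht => (hX₂s t (hsub2 ht)).mono hsub2)
    (fun t ht => (hY₂s t (hsub2 ht)).mono hsub2)
    (fun t ht => hX₂pos t (hsub2 ht)) (fun t ht => hY₂pos t (hsub2 ht))
    (left_mem_Icc.mpr (le_of_lt ht₃)) (right_mem_Icc.mpr (le_of_lt ht₃)) ht₃
  -- chain of (in)equalities for the logarithmic invariant
  have key : Real.log (X₁ T) - σf * (X₁ T + Y₁ T)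
      < Real.log (X₂ T) - σf * (X₂ T + Y₂ T) := by
    rw [A1, A2, hxe, hye]
    exact S
  -- exponentiate
  have e1 : X₁ T * Real.exp (-σf * (X₁ T + Y₁ T))
      = Real.exp (Real.log (X₁ T) - σf * (X₁ T + Y₁ T)) := by
    rw [Real.exp_sub, Real.exp_log (hX₁fpos T (right_mem_Icc.mpr ht₃T)),
      div_eq_mul_inv, ← Real.exp_neg, neg_mul]
  have e2 : X₂ T * Real.exp (-σf * (X₂ T + Y₂ T))
      = Real.exp (Real.log (X₂ T) - σf * (X₂ T + Y₂ T)) := by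
    rw [Real.exp_sub, Real.exp_log (hX₂fpos T (right_mem_Icc.mpr ht₃')),
      div_eq_mul_inv, ← Real.exp_neg, neg_mul]
  have hflt : z₁ * Real.exp (-σf * z₁) < z₂ * Real.exp (-σf * z₂) := by
    rw [hz₁.2, hz₂.2, e1, e2]
    exact Real.exp_lt_exp.mpr key
  have hmono := zexp_strictMono hσf
  have hz₁m : z₁ ∈ Icc 0 (1 / σf) := ⟨le_of_lt hz₁.1.1, le_of_lt hz₁.1.2⟩
  have hz₂m : z₂ ∈ Icc 0 (1 / σf) := ⟨le_of_lt hz₂.1.1, le_of_lt hz₂.1.2⟩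
  exact (hmono.lt_iff_lt hz₁m hz₂m).mp hflt
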